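/- Let q = 2^(2e+1) and δ ∈ F_q nonzero. The group G = F_q × F_q with operation (u,v)·(s,t) = (u+s, t+v+suδ) is abelian and is isomorphic to (Z/4Z)^(2e+1). -/

import Mathlib

/-- The group operation `(u,v)·(s,t) = (u+s, t+v+suδ)` on `F_q × F_q`. -/
def btMul {F : Type*} [Field F] (δ : F) (p r : F × F) : F × F :=
  (p.1 + r.1, r.2 + p.2 + r.1 * p.1 * δ)

/-- Type synonym carrying the `btMul` group structure. -/
def BTGrp {F : Type*} [Field F] (_δ : F) : Type _ := F × F

section BT
variable {F : Type*} [Field F] (δ : F)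

instance : CommGroup (BTGrp δ) where
  mul p r := btMul δ p r
  one := ((0 : F), (0 : F))
  inv p := (-p.1, -p.2 + p.1 * p.1 * δ)
  mul_assoc p r s := by
    show btMul δ (btMul δ p r) s = btMul δ p (btMul δ r s)
    simp only [btMul, Prod.mk.injEq]; constructor <;> ring
  one_mul p := by
    show btMul δ ((0:F),(0:F)) p = p
    simp [btMul]
    rfl
  mul_one p := by
    show btMul δ p ((0:F),(0:F)) = p
    simp [btMul]
    rfl
  inv_mul_cancel p := by
    show btMul δ (-p.1, -p.2 + p.1 * p.1 * δ) p = ((0:F),(0:F))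
    simp only [btMul, Prod.mk.injEq]; constructor <;> ring
  mul_comm p r := by
    show btMul δ p r = btMul δ r p
    simp only [btMul, Prod.mk.injEq]; constructor <;> ring

lemma BT.mul_def (p r : BTGrp δ) : p * r = btMul δ p r := rfl
lemma BT.one_def : (1 : BTGrp δ) = ((0:F),(0:F)) := rfl

lemma BT.fst_mul (p r : BTGrp δ) : (p * r).1 = p.1 + r.1 := rfl

lemma BT.fst_pow (p : BTGrp δ) (k : ℕ) : (p ^ k).1 = k • p.1 := by
  induction k with
  | zero => simp [pow_zero]; rfl
  | succ k ih => rw [pow_succ, BT.fst_mul, ih, succ_nsmul]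

lemma BT.fst_prod {ι : Type*} (s : Finset ι) (f : ι → BTGrp δ) :
    (∏ i ∈ s, f i).1 = ∑ i ∈ s, (f i).1 := by
  classical
  induction s using Finset.induction with
  | empty => simp; rfl
  | insert _ _ h ih => rw [Finset.prod_insert h, Finset.sum_insert h, BT.fst_mul, ih]

lemma BT.snd_prod {ι : Type*} (s : Finset ι) (f : ι → BTGrp δ)
    (hf : ∀ i ∈ s, (f i).1 = 0) :
    (∏ i ∈ s, f i).2 = ∑ i ∈ s, (f i).2 := by
  classical
  induction s using Finset.induction with
  | empty => simp; rfl
  | @insert a s h ih =>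
    rw [Finset.prod_insert h, Finset.sum_insert h, BT.mul_def]
    have h1 : (∏ i ∈ s, f i).1 = 0 := by
      rw [BT.fst_prod]
      exact Finset.sum_eq_zero fun i hi => hf i (Finset.mem_insert_of_mem hi)
    have h2 : (f a).1 = 0 := hf a (Finset.mem_insert_self a s)
    show (∏ i ∈ s, f i).2 + (f a).2 + (∏ i ∈ s, f i).1 * (f a).1 * δ
        = (f a).2 + ∑ i ∈ s, (f i).2
    rw [ih (fun i hi => hf i (Finset.mem_insert_of_mem hi)), h1]
    ring

end BT

theorem stmt_10 (e : ℕ) (he : 1 ≤ e) (F : Type*) [Field F] [Fintype F]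
    (hF : Fintype.card F = 2 ^ (2 * e + 1)) (δ : F) (hδ : δ ≠ 0) :
    (∀ p r : F × F, btMul δ p r = btMul δ r p) ∧
      ∃ φ : F × F ≃ (Fin (2 * e + 1) → ZMod 4),
        ∀ p r : F × F, φ (btMul δ p r) = φ p + φ r := by
  constructor
  · intro p r
    simp only [btMul, Prod.mk.injEq]; constructor <;> ring
  set n : ℕ := 2 * e + 1 with hn
  -- characteristic 2
  have hchar : CharP F 2 := by
    obtain ⟨m, hp, hcard⟩ := FiniteField.card F (ringChar F)
    have h2 : ringChar F = 2 := by
      have hdvd : ringChar F ∣ 2 ^ n := by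
        rw [← hF, hcard]
        exact dvd_pow_self _ (by positivity)
      have := hp.dvd_of_dvd_pow (n := n) (m := 2) hdvd
      exact (Nat.prime_dvd_prime_iff_eq hp Nat.prime_two).mp this
    rw [← h2]; exact ringChar.charP F
  haveI := hchar
  letI : Algebra (ZMod 2) F := ZMod.algebra F 2
  haveI : Module.Finite (ZMod 2) F := Module.Finite.of_finite
  have hrank : Module.finrank (ZMod 2) F = n := by
    have := Module.card_eq_pow_finrank (K := ZMod 2) (V := F)
    rw [ZMod.card, hF] at this
    exact (Nat.pow_right_injective (le_refl 2) this.symm)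
  -- basis of F over ZMod 2
  let b : Module.Basis (Fin n) (ZMod 2) F := (Module.finBasis (ZMod 2) F).reindex (finCongr hrank)
  -- generators
  let g : Fin n → BTGrp δ := fun i => ((b i : F), (0 : F))
  have hg4 : ∀ i, (g i) ^ 4 = 1 := by
    intro i
    have hsq : @Eq (BTGrp δ) ((g i) ^ 2) ((0:F), b i * b i * δ) := by
      rw [pow_two, BT.mul_def]
      show ((b i + b i : F), (0 : F) + 0 + b i * b i * δ) = ((0:F), b i * b i * δ)
      rw [CharTwo.add_self_eq_zero, zero_add, zero_add]
    have h42 : (g i) ^ 4 = ((g i) ^ 2) ^ 2 := by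
      rw [← pow_mul]
    rw [h42, pow_two, hsq]
    show ((0 + 0 : F), (b i * b i * δ) + (b i * b i * δ) + 0 * 0 * δ) = ((0:F),(0:F))
    simp [CharTwo.add_self_eq_zero]
  -- the homomorphism
  let ψ : (Fin n → ZMod 4) → BTGrp δ := fun a => ∏ i, (g i) ^ (a i).val
  have hψ : ∀ a c : Fin n → ZMod 4, ψ (a + c) = ψ a * ψ c := by
    intro a c
    show ∏ i, (g i) ^ ((a + c) i).val = (∏ i, (g i) ^ (a i).val) * ∏ i, (g i) ^ (c i).val
    rw [← Finset.prod_mul_distrib]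
    refine Finset.prod_congr rfl fun i _ => ?_
    have : ((a + c) i).val = ((a i).val + (c i).val) % 4 := ZMod.val_add _ _
    rw [this, ← pow_eq_pow_mod _ (hg4 i), pow_add]
  -- injectivity
  have hinj : Function.Injective ψ := by
    intro a c hac
    have key : ∀ a : Fin n → ZMod 4, ψ a = 1 → a = 0 := by
      intro a ha
      -- first coordinates
      have hfst : (ψ a).1 = ∑ i, ((a i).val : ZMod 2) • (b i) := by
        show (∏ i, (g i) ^ (a i).val).1 = _
        rw [BT.fst_prod]
        refine Finset.sum_congr rfl fun i _ => ?_
        rw [BT.fst_pow, Nat.cast_smul_eq_nsmul]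
      have hfst0 : ∑ i, ((a i).val : ZMod 2) • (b i) = 0 := by
        rw [← hfst, ha]; rfl
      have heven : ∀ i, ((a i).val : ZMod 2) = 0 :=
        Fintype.linearIndependent_iff.mp b.linearIndependent _ hfst0
      have hval : ∀ i, a i = 0 ∨ a i = 2 := by
        intro i
        have h2 : (2 : ℕ) ∣ (a i).val := by
          have := heven i
          rwa [ZMod.natCast_eq_zero_iff] at this
        have hlt : (a i).val < 4 := ZMod.val_lt _
        have hv : (a i).val = 0 ∨ (a i).val = 2 := by omega
        rcases hv with h | h
        · left; exact (ZMod.val_eq_zero _).mp h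
        · right
          have := congrArg (Nat.cast : ℕ → ZMod 4) h
          rwa [ZMod.natCast_val, ZMod.cast_id] at this
      -- now each factor
      let c2 : Fin n → ZMod 2 := fun i => if a i = 2 then 1 else 0
      have hfac : ∀ i, (g i) ^ (a i).val =
          (((0:F), (algebraMap (ZMod 2) F (c2 i)) * (b i * b i * δ)) : BTGrp δ) := by
        intro i
        rcases hval i with h0 | h2
        · have hc : c2 i = 0 := by simp only [c2, h0]; decide
          rw [h0, hc, map_zero, zero_mul]
          have hv : (0 : ZMod 4).val = 0 := rfl
          rw [hv, pow_zero, BT.one_def]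
        · have hc : c2 i = 1 := by simp only [c2, h2]; decide
          rw [h2, hc, map_one, one_mul]
          have hv : (2 : ZMod 4).val = 2 := rfl
          rw [hv, pow_two, BT.mul_def]
          show ((b i + b i : F), (0 : F) + 0 + b i * b i * δ) = ((0:F), b i * b i * δ)
          simp [CharTwo.add_self_eq_zero]
      have hsnd : (ψ a).2 = ∑ i, (algebraMap (ZMod 2) F (c2 i)) * (b i * b i * δ) := by
        show (∏ i, (g i) ^ (a i).val).2 = _
        rw [BT.snd_prod]
        · exact Finset.sum_congr rfl fun i _ => by rw [hfac i]
        · intro i _; rw [hfac i]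
      have hsnd0 : ∑ i, (algebraMap (ZMod 2) F (c2 i)) * (b i * b i * δ) = 0 := by
        rw [← hsnd, ha]; rfl
      -- factor δ and use Frobenius
      have hsum : ∑ i, (algebraMap (ZMod 2) F (c2 i)) * (b i * b i) = 0 := by
        have : (∑ i, (algebraMap (ZMod 2) F (c2 i)) * (b i * b i)) * δ = 0 := by
          rw [Finset.sum_mul, ← hsnd0]
          exact Finset.sum_congr rfl fun i _ => by ring
        rcases mul_eq_zero.mp this with h | h
        · exact h
        · exact absurd h hδ
      have hsq : (∑ i, c2 i • b i) ^ 2 = ∑ i, (algebraMap (ZMod 2) F (c2 i)) * (b i * b i) := by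
        rw [sum_pow_char]
        refine Finset.sum_congr rfl fun i _ => ?_
        rw [Algebra.smul_def, mul_pow, ← map_pow]
        have hid : (c2 i) ^ 2 = c2 i := (by decide : ∀ x : ZMod 2, x ^ 2 = x) (c2 i)
        rw [hid, pow_two]
      have hc0 : ∑ i, c2 i • b i = 0 := by
        have hz : (∑ i, c2 i • b i) ^ 2 = 0 := hsq.trans hsum
        exact pow_eq_zero_iff (Nat.succ_ne_zero 1) |>.mp hz
      have hc : ∀ i, c2 i = 0 :=
        Fintype.linearIndependent_iff.mp b.linearIndependent _ hc0
      funext i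
      rcases hval i with h0 | h2
      · exact h0
      · exfalso
        have := hc i
        simp only [c2, h2, if_pos rfl] at this
        exact one_ne_zero this
    have : ψ (a + (-c)) = 1 := by
      rw [hψ, hac, ← hψ]
      have : c + -c = 0 := by ring
      rw [this]
      show ∏ i, (g i) ^ ((0 : ZMod 4)).val = 1
      simp
    have h0 := key _ this
    have hsub : a - c = 0 := by rwa [sub_eq_add_neg]
    exact sub_eq_zero.mp hsub
  -- bijectivity via cardinality
  haveI : Fintype (BTGrp δ) := inferInstanceAs (Fintype (F × F))
  have hcard : Fintype.card (Fin n → ZMod 4) = Fintype.card (BTGrp δ) := by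
    have h1 : Fintype.card (BTGrp δ) = Fintype.card (F × F) :=
      Fintype.card_congr (Equiv.refl _)
    rw [h1, Fintype.card_prod, hF, Fintype.card_fun, ZMod.card, Fintype.card_fin]
    rw [show (4:ℕ) = 2 ^ 2 from rfl, ← pow_mul, ← pow_add]
    ring_nf
  have hbij : Function.Bijective ψ :=
    (Fintype.bijective_iff_injective_and_card ψ).mpr ⟨hinj, hcard⟩
  let φ0 : (Fin n → ZMod 4) ≃ BTGrp δ := Equiv.ofBijective ψ hbij
  refine ⟨φ0.symm, ?_⟩
  intro p r
  apply φ0.injective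
  have hp : ψ (φ0.symm p) = p := φ0.apply_symm_apply p
  have hr : ψ (φ0.symm r) = r := φ0.apply_symm_apply r
  have hmul : ψ (φ0.symm p + φ0.symm r) = btMul δ p r := by
    rw [hψ, hp, hr]; rfl
  exact (φ0.apply_symm_apply (btMul δ p r)).trans hmul.symm
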